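/- In the one-dimensional periodic coarse-graining setting with M even: for every coarse configuration η ∈ ℤ^M with F⁻¹(η) ≠ ∅ and every σ with F(σ) = η, the multiscale decomposition of the short-range Gibbs weight holds exactly: e^{−βH^s(σ)} P(σ|η) = R(η) · ∏_{k odd} (1 + f^s_{k−1,k+1}(η(k); σ^{k−1}, σ^{k+1})) · ν(σ|η), where H^s = Σ_k H_k + Σ_k W_{k,k+1}, P(·|η) is the uniform measure on {σ : F(σ)=η}, R(η) = ∏_{k odd} Z_k(η(k); 0, 0)^{−1} · ∏_{k even} Z_{k−1,k,k+1}(η; 0, 0), and f^s_{k−1,k+1}(η(k); σ^{k−1}, σ^{k+1}) = Z_k(η(k); σ^{k−1}, σ^{k+1}) Z_k(η(k); 0, 0) / ( Z_k(η(k); 0, σ^{k+1}) Z_k(η(k); σ^{k−1}, 0) ) − 1. -/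

import Mathlib

open Finset

/-- The spin value of a site: `true ↦ +1`, `false ↦ -1`. -/
def spin (b : Bool) : ℤ := if b then 1 else -1

/-- The coarse cell `C_k = {kQ, …, (k+1)Q - 1}` inside the lattice `Fin (M*Q)`. -/
def cell (M Q : ℕ) (k : Fin M) : Finset (Fin (M * Q)) :=
  univ.filter (fun x => x.val / Q = k.val)

/-- The coarse-graining map `F(σ)(k) = Σ_{x ∈ C_k} σ(x)`. -/
def cg (M Q : ℕ) (σ : Fin (M * Q) → Bool) (k : Fin M) : ℤ :=
  ∑ x ∈ cell M Q k, spin (σ x)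

/-- Configurations of the coarse cell `C_k` with total magnetization `m`. -/
def cellCfgs (M Q : ℕ) (k : Fin M) (m : ℤ) :
    Finset ({x : Fin (M * Q) // x ∈ cell M Q k} → Bool) :=
  univ.filter (fun τ => ∑ x, spin (τ x) = m)

/-- The configuration obtained from `σ` by replacing its values on the cell `C_k`
by the cell configuration `τ`. -/
def upd (M Q : ℕ) (k : Fin M) (σ : Fin (M * Q) → Bool)
    (τ : {x : Fin (M * Q) // x ∈ cell M Q k} → Bool) : Fin (M * Q) → Bool :=
  fun x => if h : x ∈ cell M Q k then τ ⟨x, h⟩ else σ x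

noncomputable section

variable (M Q : ℕ) [NeZero M] (β : ℝ)
  (HK WK : Fin M → (Fin (M * Q) → Bool) → ℝ) (η : Fin M → ℤ)

/-- `Z_k(η(k); σ^{k-1}, σ^{k+1})`: the single-cell partition function of `C_k` with
boundary conditions given by `σ` on the neighbouring cells (cell indices mod `M`). -/
def Zfull (k : Fin M) (σ : Fin (M * Q) → Bool) : ℝ :=
  (∑ τ ∈ cellCfgs M Q k (η k),
      Real.exp (-β * (WK (k - 1) (upd M Q k σ τ) + HK k (upd M Q k σ τ) +
        WK k (upd M Q k σ τ))))
    / ((cellCfgs M Q k (η k)).card : ℝ)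

/-- `Z_k(η(k); σ^{k-1}, 0)`: boundary condition on the left, free on the right. -/
def ZfreeR (k : Fin M) (σ : Fin (M * Q) → Bool) : ℝ :=
  (∑ τ ∈ cellCfgs M Q k (η k),
      Real.exp (-β * (WK (k - 1) (upd M Q k σ τ) + HK k (upd M Q k σ τ))))
    / ((cellCfgs M Q k (η k)).card : ℝ)

/-- `Z_k(η(k); 0, σ^{k+1})`: free on the left, boundary condition on the right. -/
def ZfreeL (k : Fin M) (σ : Fin (M * Q) → Bool) : ℝ :=
  (∑ τ ∈ cellCfgs M Q k (η k),
      Real.exp (-β * (HK k (upd M Q k σ τ) + WK k (upd M Q k σ τ))))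
    / ((cellCfgs M Q k (η k)).card : ℝ)

/-- `Z_k(η(k); 0, 0)`: the free-boundary single-cell partition function. -/
def Zzero (k : Fin M) : ℝ :=
  (∑ τ ∈ cellCfgs M Q k (η k),
      Real.exp (-β * HK k (upd M Q k (fun _ => false) τ)))
    / ((cellCfgs M Q k (η k)).card : ℝ)

/-- `Z_{k-1,k,k+1}(η; 0, 0)`: the three-cell free-boundary partition function. -/
def Z3 (k : Fin M) : ℝ :=
  (∑ τm ∈ cellCfgs M Q (k - 1) (η (k - 1)), ∑ τ ∈ cellCfgs M Q k (η k),
      ∑ τp ∈ cellCfgs M Q (k + 1) (η (k + 1)),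
      (let ρ := upd M Q (k + 1)
          (upd M Q k (upd M Q (k - 1) (fun _ => false) τm) τ) τp
       Real.exp (-β * (HK (k - 1) ρ + WK (k - 1) ρ + HK k ρ + WK k ρ + HK (k + 1) ρ))))
    / (((cellCfgs M Q (k - 1) (η (k - 1))).card : ℝ) *
       ((cellCfgs M Q k (η k)).card : ℝ) *
       ((cellCfgs M Q (k + 1) (η (k + 1))).card : ℝ))

/-- The reference conditional measure `ν(σ|η)` of the multiscale decomposition. -/
def nuM (σ : Fin (M * Q) → Bool) : ℝ :=
  (∏ k ∈ univ.filter (fun k : Fin M => k.val % 2 = 1),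
      Real.exp (-β * (HK k σ + WK (k - 1) σ + WK k σ)) / Zfull M Q β HK WK η k σ
        / ((cellCfgs M Q k (η k)).card : ℝ))
  *
  ∏ k ∈ univ.filter (fun k : Fin M => k.val % 2 = 0),
      Real.exp (-β * HK k σ) * ZfreeR M Q β HK WK η (k + 1) σ *
          ZfreeL M Q β HK WK η (k - 1) σ
        / Z3 M Q β HK WK η k / ((cellCfgs M Q k (η k)).card : ℝ)

/-- The short-range error term `f^s_{k-1,k+1}(η(k); σ^{k-1}, σ^{k+1})`. -/
def fsOdd (k : Fin M) (σ : Fin (M * Q) → Bool) : ℝ :=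
  Zfull M Q β HK WK η k σ * Zzero M Q β HK η k /
    (ZfreeL M Q β HK WK η k σ * ZfreeR M Q β HK WK η k σ) - 1

end

section Aux

variable {M Q : ℕ}

lemma mem_cell_iff {k : Fin M} {x : Fin (M * Q)} : x ∈ cell M Q k ↔ x.val / Q = k.val := by
  simp [cell]

def idx (hQ : 1 ≤ Q) (x : Fin (M * Q)) : Fin M :=
  ⟨x.val / Q, (Nat.div_lt_iff_lt_mul hQ).2 x.isLt⟩

lemma mem_cell_idx (hQ : 1 ≤ Q) (x : Fin (M * Q)) : x ∈ cell M Q (idx hQ x) :=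
  mem_cell_iff.2 rfl

lemma idx_eq_of_mem (hQ : 1 ≤ Q) {k : Fin M} {x : Fin (M * Q)} (h : x ∈ cell M Q k) :
    idx hQ x = k := Fin.ext (mem_cell_iff.1 h)

def combine (hQ : 1 ≤ Q) (g : ∀ k : Fin M, {x : Fin (M * Q) // x ∈ cell M Q k} → Bool) :
    Fin (M * Q) → Bool :=
  fun x => g (idx hQ x) ⟨x, mem_cell_idx hQ x⟩

lemma combine_apply (hQ : 1 ≤ Q) (g : ∀ k : Fin M, {x : Fin (M * Q) // x ∈ cell M Q k} → Bool)
    {k : Fin M} {x : Fin (M * Q)} (h : x ∈ cell M Q k) :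
    combine hQ g x = g k ⟨x, h⟩ := by
  have hk := idx_eq_of_mem hQ h
  subst hk; rfl

lemma sum_spin_sub (σ : Fin (M * Q) → Bool) (k : Fin M) :
    ∑ x : {x : Fin (M * Q) // x ∈ cell M Q k}, spin (σ x.val) = cg M Q σ k := by
  rw [cg]
  exact Finset.sum_coe_sort (cell M Q k) (fun x => spin (σ x))

lemma restrict_mem {σ : Fin (M * Q) → Bool} {η : Fin M → ℤ} (hσ : cg M Q σ = η) (k : Fin M) :
    (fun x : {x : Fin (M * Q) // x ∈ cell M Q k} => σ x.val) ∈ cellCfgs M Q k (η k) := by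
  simp only [cellCfgs, mem_filter, mem_univ, true_and]
  rw [sum_spin_sub σ k, hσ]

lemma card_filter_cg (hQ : 1 ≤ Q) (η : Fin M → ℤ) :
    (univ.filter (fun σ : Fin (M * Q) → Bool => cg M Q σ = η)).card
      = ∏ k, (cellCfgs M Q k (η k)).card := by
  rw [← Fintype.card_piFinset]
  apply Finset.card_nbij'
    (fun σ => fun k => fun x => σ x.val) (combine hQ)
  · intro σ hσ
    simp only [Finset.mem_coe, mem_filter, mem_univ, true_and] at hσ
    rw [Finset.mem_coe, Fintype.mem_piFinset]
    exact fun k => restrict_mem hσ k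
  · intro g hg
    rw [Finset.mem_coe, Fintype.mem_piFinset] at hg
    simp only [Finset.mem_coe, mem_filter, mem_univ, true_and]
    funext k
    rw [cg, ← Finset.sum_attach (cell M Q k) (fun x => spin (combine hQ g x))]
    have hterm : ∀ x ∈ (cell M Q k).attach,
        spin (combine hQ g x.val) = spin (g k x) := by
      intro x _
      rw [combine_apply hQ g x.2]
    rw [Finset.sum_congr rfl hterm]
    have := hg k
    simp only [cellCfgs, mem_filter, mem_univ, true_and] at this
    rw [← this]
    rfl
  · intro σ _; funext x; rfl
  · intro g _
    funext k x
    exact combine_apply hQ g x.2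

end Aux


section Shift

variable {M : ℕ} [NeZero M]

lemma val_add_one_mod_two (hMe : Even M) (hM : 2 ≤ M) (k : Fin M) :
    ((k + 1 : Fin M)).val % 2 = (k.val + 1) % 2 := by
  have h1 : ((1 : Fin M)).val = 1 := by
    rw [Fin.val_one', Nat.mod_eq_of_lt (by omega)]
  have h : ((k + 1 : Fin M)).val = (k.val + 1) % M := by
    rw [Fin.add_def, h1]
  obtain ⟨m, hm⟩ := hMe
  have hk := k.isLt
  rcases Nat.lt_or_ge (k.val + 1) M with hlt | hge
  · rw [h, Nat.mod_eq_of_lt hlt]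
  · have he : k.val + 1 = M := by omega
    rw [h, he, Nat.mod_self]
    omega

lemma parity_add_one_of_even (hMe : Even M) (hM : 2 ≤ M) {k : Fin M}
    (h : k.val % 2 = 0) : ((k + 1 : Fin M)).val % 2 = 1 := by
  rw [val_add_one_mod_two hMe hM]; omega

lemma parity_add_one_of_odd (hMe : Even M) (hM : 2 ≤ M) {k : Fin M}
    (h : k.val % 2 = 1) : ((k + 1 : Fin M)).val % 2 = 0 := by
  rw [val_add_one_mod_two hMe hM]; omega

lemma parity_sub_one_of_even (hMe : Even M) (hM : 2 ≤ M) {k : Fin M}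
    (h : k.val % 2 = 0) : ((k - 1 : Fin M)).val % 2 = 1 := by
  have e : (k - 1 : Fin M) + 1 = k := by abel
  have := val_add_one_mod_two hMe hM (k - 1)
  rw [e, h] at this
  omega

lemma parity_sub_one_of_odd (hMe : Even M) (hM : 2 ≤ M) {k : Fin M}
    (h : k.val % 2 = 1) : ((k - 1 : Fin M)).val % 2 = 0 := by
  have e : (k - 1 : Fin M) + 1 = k := by abel
  have := val_add_one_mod_two hMe hM (k - 1)
  rw [e, h] at this
  omega

lemma prod_shift (hMe : Even M) (hM : 2 ≤ M) (F : Fin M → ℝ) :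
    (∏ k ∈ univ.filter (fun k : Fin M => k.val % 2 = 0), F (k + 1))
      = ∏ k ∈ univ.filter (fun k : Fin M => k.val % 2 = 1), F k := by
  refine Finset.prod_nbij' (fun k => k + 1) (fun k => k - 1) ?_ ?_ ?_ ?_ ?_
  · intro k hk
    simp only [mem_filter, mem_univ, true_and] at *
    exact parity_add_one_of_even hMe hM hk
  · intro k hk
    simp only [mem_filter, mem_univ, true_and] at *
    exact parity_sub_one_of_odd hMe hM hk
  · intro k _; abel
  · intro k _; abel
  · intro k _; rfl

lemma prod_shift_sub (hMe : Even M) (hM : 2 ≤ M) (F : Fin M → ℝ) :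
    (∏ k ∈ univ.filter (fun k : Fin M => k.val % 2 = 0), F (k - 1))
      = ∏ k ∈ univ.filter (fun k : Fin M => k.val % 2 = 1), F k := by
  refine Finset.prod_nbij' (fun k => k - 1) (fun k => k + 1) ?_ ?_ ?_ ?_ ?_
  · intro k hk
    simp only [mem_filter, mem_univ, true_and] at *
    exact parity_sub_one_of_even hMe hM hk
  · intro k hk
    simp only [mem_filter, mem_univ, true_and] at *
    exact parity_add_one_of_odd hMe hM hk
  · intro k _; abel
  · intro k _; abel
  · intro k _; rfl

lemma prod_shift_sub' (hMe : Even M) (hM : 2 ≤ M) (F : Fin M → ℝ) :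
    (∏ k ∈ univ.filter (fun k : Fin M => k.val % 2 = 1), F (k - 1))
      = ∏ k ∈ univ.filter (fun k : Fin M => k.val % 2 = 0), F k := by
  refine Finset.prod_nbij' (fun k => k - 1) (fun k => k + 1) ?_ ?_ ?_ ?_ ?_
  · intro k hk
    simp only [mem_filter, mem_univ, true_and] at *
    exact parity_sub_one_of_odd hMe hM hk
  · intro k hk
    simp only [mem_filter, mem_univ, true_and] at *
    exact parity_add_one_of_even hMe hM hk
  · intro k _; abel
  · intro k _; abel
  · intro k _; rfl

lemma prod_even_mul_odd (F : Fin M → ℝ) :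
    (∏ k ∈ univ.filter (fun k : Fin M => k.val % 2 = 0), F k) *
      ∏ k ∈ univ.filter (fun k : Fin M => k.val % 2 = 1), F k = ∏ k, F k := by
  rw [← Finset.prod_filter_mul_prod_filter_not univ (fun k : Fin M => k.val % 2 = 0) F]
  have hfe : filter (fun k : Fin M => k.val % 2 = 1) univ
      = filter (fun k : Fin M => ¬ k.val % 2 = 0) univ :=
    Finset.filter_congr (fun k _ => by omega)
  rw [hfe]

end Shift


lemma main_algebra (M : ℕ) [NeZero M] (hM : 2 ≤ M) (hMe : Even M)
    (eH eW Zf ZL ZR Zz ZZ N : Fin M → ℝ)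
    (hZf : ∀ k, Zf k ≠ 0) (hZL : ∀ k, ZL k ≠ 0) (hZR : ∀ k, ZR k ≠ 0)
    (hZz : ∀ k, Zz k ≠ 0) (hZZ : ∀ k, ZZ k ≠ 0) (hN : ∀ k, N k ≠ 0) :
    ((∏ k ∈ univ.filter (fun k : Fin M => k.val % 2 = 1), (Zz k)⁻¹) *
        ∏ k ∈ univ.filter (fun k : Fin M => k.val % 2 = 0), ZZ k) *
      (∏ k ∈ univ.filter (fun k : Fin M => k.val % 2 = 1),
        (1 + (Zf k * Zz k / (ZL k * ZR k) - 1))) *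
      ((∏ k ∈ univ.filter (fun k : Fin M => k.val % 2 = 1),
          eH k * eW (k - 1) * eW k / Zf k / N k) *
        ∏ k ∈ univ.filter (fun k : Fin M => k.val % 2 = 0),
          eH k * ZR (k + 1) * ZL (k - 1) / ZZ k / N k)
      = (∏ k, eH k) * (∏ k, eW k) * (∏ k, N k)⁻¹ := by
  calc
    ((∏ k ∈ univ.filter (fun k : Fin M => k.val % 2 = 1), (Zz k)⁻¹) *
        ∏ k ∈ univ.filter (fun k : Fin M => k.val % 2 = 0), ZZ k) *
      (∏ k ∈ univ.filter (fun k : Fin M => k.val % 2 = 1),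
        (1 + (Zf k * Zz k / (ZL k * ZR k) - 1))) *
      ((∏ k ∈ univ.filter (fun k : Fin M => k.val % 2 = 1),
          eH k * eW (k - 1) * eW k / Zf k / N k) *
        ∏ k ∈ univ.filter (fun k : Fin M => k.val % 2 = 0),
          eH k * ZR (k + 1) * ZL (k - 1) / ZZ k / N k)
      = (∏ k ∈ univ.filter (fun k : Fin M => k.val % 2 = 1),
          (Zz k)⁻¹ * ((1 + (Zf k * Zz k / (ZL k * ZR k) - 1)) *
            (eH k * eW (k - 1) * eW k / Zf k / N k))) *
        ∏ k ∈ univ.filter (fun k : Fin M => k.val % 2 = 0),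
          ZZ k * (eH k * ZR (k + 1) * ZL (k - 1) / ZZ k / N k) := by
        rw [Finset.prod_mul_distrib, Finset.prod_mul_distrib, Finset.prod_mul_distrib]
        ring
    _ = (∏ k ∈ univ.filter (fun k : Fin M => k.val % 2 = 1),
          eH k * eW (k - 1) * eW k / (ZL k * ZR k) / N k) *
        ∏ k ∈ univ.filter (fun k : Fin M => k.val % 2 = 0),
          eH k / N k * (ZR (k + 1) * ZL (k - 1)) := by
        congr 1
        · refine Finset.prod_congr rfl fun k _ => ?_
          have h1 := hZf k; have h2 := hZL k; have h3 := hZR k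
          have h4 := hZz k; have h5 := hN k
          field_simp
          ring
        · refine Finset.prod_congr rfl fun k _ => ?_
          have h1 := hZZ k; have h5 := hN k
          field_simp
    _ = (∏ k ∈ univ.filter (fun k : Fin M => k.val % 2 = 1),
          eH k * eW (k - 1) * eW k / (ZL k * ZR k) / N k) *
        ((∏ k ∈ univ.filter (fun k : Fin M => k.val % 2 = 0), eH k / N k) *
          ((∏ k ∈ univ.filter (fun k : Fin M => k.val % 2 = 0), ZR (k + 1)) *
            ∏ k ∈ univ.filter (fun k : Fin M => k.val % 2 = 0), ZL (k - 1))) := by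
        rw [Finset.prod_mul_distrib, Finset.prod_mul_distrib]
    _ = (∏ k ∈ univ.filter (fun k : Fin M => k.val % 2 = 1),
          eH k * eW (k - 1) * eW k / (ZL k * ZR k) / N k) *
        ((∏ k ∈ univ.filter (fun k : Fin M => k.val % 2 = 0), eH k / N k) *
          ((∏ k ∈ univ.filter (fun k : Fin M => k.val % 2 = 1), ZR k) *
            ∏ k ∈ univ.filter (fun k : Fin M => k.val % 2 = 1), ZL k)) := by
        rw [prod_shift hMe hM ZR, prod_shift_sub hMe hM ZL]
    _ = (∏ k ∈ univ.filter (fun k : Fin M => k.val % 2 = 1),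
          eH k * eW (k - 1) * eW k / (ZL k * ZR k) / N k * ZR k * ZL k) *
        ∏ k ∈ univ.filter (fun k : Fin M => k.val % 2 = 0), eH k / N k := by
        rw [Finset.prod_mul_distrib, Finset.prod_mul_distrib]
        ring
    _ = (∏ k ∈ univ.filter (fun k : Fin M => k.val % 2 = 1),
          eH k / N k * (eW (k - 1) * eW k)) *
        ∏ k ∈ univ.filter (fun k : Fin M => k.val % 2 = 0), eH k / N k := by
        congr 1
        refine Finset.prod_congr rfl fun k _ => ?_
        have h2 := hZL k; have h3 := hZR k; have h5 := hN k
        field_simp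
    _ = ((∏ k ∈ univ.filter (fun k : Fin M => k.val % 2 = 1), eH k / N k) *
          ((∏ k ∈ univ.filter (fun k : Fin M => k.val % 2 = 1), eW (k - 1)) *
            ∏ k ∈ univ.filter (fun k : Fin M => k.val % 2 = 1), eW k)) *
        ∏ k ∈ univ.filter (fun k : Fin M => k.val % 2 = 0), eH k / N k := by
        rw [Finset.prod_mul_distrib, Finset.prod_mul_distrib]
    _ = ((∏ k ∈ univ.filter (fun k : Fin M => k.val % 2 = 0), eH k / N k) *
          ∏ k ∈ univ.filter (fun k : Fin M => k.val % 2 = 1), eH k / N k) *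
        ((∏ k ∈ univ.filter (fun k : Fin M => k.val % 2 = 0), eW k) *
          ∏ k ∈ univ.filter (fun k : Fin M => k.val % 2 = 1), eW k) := by
        rw [prod_shift_sub' hMe hM eW]
        ring
    _ = (∏ k, eH k / N k) * ∏ k, eW k := by
        rw [prod_even_mul_odd, prod_even_mul_odd]
    _ = (∏ k, eH k) * (∏ k, eW k) * (∏ k, N k)⁻¹ := by
        rw [Finset.prod_div_distrib]
        ring


/-- the exact multiscale decomposition of the short-range Gibbs weight,
`e^{-βH^s(σ)} P(σ|η) = R(η) ∏_{k odd} (1 + f^s_{k-1,k+1}) ν(σ|η)`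
(one-dimensional periodic lattice, `M` even). -/
theorem statement18 (M Q : ℕ) [NeZero M] (hM : 2 ≤ M) (hMe : Even M) (hQ : 1 ≤ Q)
    (β : ℝ) (hβ : 0 < β)
    (HK WK : Fin M → (Fin (M * Q) → Bool) → ℝ)
    (hHloc : ∀ (k : Fin M) (σ σ' : Fin (M * Q) → Bool),
      (∀ x ∈ cell M Q k, σ x = σ' x) → HK k σ = HK k σ')
    (hWloc : ∀ (k : Fin M) (σ σ' : Fin (M * Q) → Bool),
      (∀ x ∈ cell M Q k ∪ cell M Q (k + 1), σ x = σ' x) → WK k σ = WK k σ')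
    (η : Fin M → ℤ)
    (hne : (univ.filter (fun σ : Fin (M * Q) → Bool => cg M Q σ = η)).Nonempty) :
    ∀ σ : Fin (M * Q) → Bool, cg M Q σ = η →
      Real.exp (-β * ((∑ k, HK k σ) + ∑ k, WK k σ)) *
          ((univ.filter (fun σ' : Fin (M * Q) → Bool => cg M Q σ' = η)).card : ℝ)⁻¹
        = ((∏ k ∈ univ.filter (fun k : Fin M => k.val % 2 = 1),
              (Zzero M Q β HK η k)⁻¹) *
            ∏ k ∈ univ.filter (fun k : Fin M => k.val % 2 = 0),
              Z3 M Q β HK WK η k) *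
          (∏ k ∈ univ.filter (fun k : Fin M => k.val % 2 = 1),
              (1 + fsOdd M Q β HK WK η k σ)) *
          nuM M Q β HK WK η σ := by
  intro σ hσ
  obtain ⟨σ₀, hσ₀mem⟩ := hne
  have hσ₀ : cg M Q σ₀ = η := (mem_filter.1 hσ₀mem).2
  have hcne : ∀ k : Fin M, (cellCfgs M Q k (η k)).Nonempty :=
    fun k => ⟨_, restrict_mem hσ₀ k⟩
  have hNpos : ∀ k : Fin M, 0 < ((cellCfgs M Q k (η k)).card : ℝ) := by
    intro k
    exact_mod_cast Finset.card_pos.2 (hcne k)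
  have hZf : ∀ k, 0 < Zfull M Q β HK WK η k σ := fun k =>
    div_pos (Finset.sum_pos (fun τ _ => Real.exp_pos _) (hcne k)) (hNpos k)
  have hZL : ∀ k, 0 < ZfreeL M Q β HK WK η k σ := fun k =>
    div_pos (Finset.sum_pos (fun τ _ => Real.exp_pos _) (hcne k)) (hNpos k)
  have hZR : ∀ k, 0 < ZfreeR M Q β HK WK η k σ := fun k =>
    div_pos (Finset.sum_pos (fun τ _ => Real.exp_pos _) (hcne k)) (hNpos k)
  have hZz : ∀ k, 0 < Zzero M Q β HK η k := fun k =>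
    div_pos (Finset.sum_pos (fun τ _ => Real.exp_pos _) (hcne k)) (hNpos k)
  have hZ3 : ∀ k, 0 < Z3 M Q β HK WK η k := fun k =>
    div_pos
      (Finset.sum_pos
        (fun τm _ => Finset.sum_pos
          (fun τ _ => Finset.sum_pos (fun τp _ => Real.exp_pos _) (hcne _)) (hcne _))
        (hcne _))
      (mul_pos (mul_pos (hNpos _) (hNpos _)) (hNpos _))
  have hnu1 : (∏ k ∈ univ.filter (fun k : Fin M => k.val % 2 = 1),
      Real.exp (-β * (HK k σ + WK (k - 1) σ + WK k σ)) / Zfull M Q β HK WK η k σ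
        / ((cellCfgs M Q k (η k)).card : ℝ))
      = ∏ k ∈ univ.filter (fun k : Fin M => k.val % 2 = 1),
          Real.exp (-β * HK k σ) * Real.exp (-β * WK (k - 1) σ) * Real.exp (-β * WK k σ)
            / Zfull M Q β HK WK η k σ / ((cellCfgs M Q k (η k)).card : ℝ) := by
    refine Finset.prod_congr rfl fun k _ => ?_
    rw [← Real.exp_add, ← Real.exp_add,
      show -β * HK k σ + -β * WK (k - 1) σ + -β * WK k σ
        = -β * (HK k σ + WK (k - 1) σ + WK k σ) by ring]
  have halg :
      ((∏ k ∈ univ.filter (fun k : Fin M => k.val % 2 = 1), (Zzero M Q β HK η k)⁻¹) *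
          ∏ k ∈ univ.filter (fun k : Fin M => k.val % 2 = 0), Z3 M Q β HK WK η k) *
        (∏ k ∈ univ.filter (fun k : Fin M => k.val % 2 = 1),
          (1 + (Zfull M Q β HK WK η k σ * Zzero M Q β HK η k /
            (ZfreeL M Q β HK WK η k σ * ZfreeR M Q β HK WK η k σ) - 1))) *
        ((∏ k ∈ univ.filter (fun k : Fin M => k.val % 2 = 1),
            Real.exp (-β * HK k σ) * Real.exp (-β * WK (k - 1) σ) * Real.exp (-β * WK k σ)
              / Zfull M Q β HK WK η k σ / ((cellCfgs M Q k (η k)).card : ℝ)) *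
          ∏ k ∈ univ.filter (fun k : Fin M => k.val % 2 = 0),
            Real.exp (-β * HK k σ) * ZfreeR M Q β HK WK η (k + 1) σ *
              ZfreeL M Q β HK WK η (k - 1) σ / Z3 M Q β HK WK η k
              / ((cellCfgs M Q k (η k)).card : ℝ))
        = (∏ k, Real.exp (-β * HK k σ)) * (∏ k, Real.exp (-β * WK k σ)) *
            (∏ k, ((cellCfgs M Q k (η k)).card : ℝ))⁻¹ :=
    main_algebra M hM hMe
      (fun k => Real.exp (-β * HK k σ)) (fun k => Real.exp (-β * WK k σ))
      (fun k => Zfull M Q β HK WK η k σ) (fun k => ZfreeL M Q β HK WK η k σ)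
      (fun k => ZfreeR M Q β HK WK η k σ) (fun k => Zzero M Q β HK η k)
      (fun k => Z3 M Q β HK WK η k) (fun k => ((cellCfgs M Q k (η k)).card : ℝ))
      (fun k => (hZf k).ne') (fun k => (hZL k).ne') (fun k => (hZR k).ne')
      (fun k => (hZz k).ne') (fun k => (hZ3 k).ne') (fun k => (hNpos k).ne')
  rw [nuM, hnu1]
  simp only [fsOdd]
  rw [halg]
  have hcard : ((univ.filter (fun σ' : Fin (M * Q) → Bool => cg M Q σ' = η)).card : ℝ)
      = ∏ k, ((cellCfgs M Q k (η k)).card : ℝ) := by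
    rw [card_filter_cg hQ η]
    push_cast
    rfl
  rw [hcard,
    show -β * ((∑ k, HK k σ) + ∑ k, WK k σ)
        = (∑ k, -β * HK k σ) + ∑ k, -β * WK k σ by
      rw [← Finset.mul_sum, ← Finset.mul_sum]; ring,
    Real.exp_add, Real.exp_sum, Real.exp_sum]
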